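/- Let n ≥ 1 and let T be a real n×n matrix that factors as T = 𝓛₁ * ⋯ * 𝓛_p * 𝓤_q * ⋯ * 𝓤₁, where each 𝓛ᵢ is a positive lower-bidiagonal matrix and each 𝓤ⱼ is a positive upper-bidiagonal matrix. Then there exist normalized positive lower-bidiagonal matrices L₁, …, L_p, normalized positive upper-bidiagonal matrices U₁, …, U_q, and a diagonal matrix Δ all of whose diagonal entries are positive, such that T = L₁ * ⋯ * L_p * Δ * U_q * ⋯ * U₁. -/

import Mathlib

/-- An `n×n` real matrix `L` is positive lower-bidiagonal if `L i j = 0` whenever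
`i ≠ j` and `i ≠ j+1`, and all diagonal and subdiagonal entries are positive. -/
def IsPosLowerBidiagonal {n : ℕ} (L : Matrix (Fin n) (Fin n) ℝ) : Prop :=
  (∀ i j : Fin n, (i : ℕ) ≠ (j : ℕ) → (i : ℕ) ≠ (j : ℕ) + 1 → L i j = 0) ∧
  (∀ i : Fin n, 0 < L i i) ∧
  (∀ i j : Fin n, (i : ℕ) = (j : ℕ) + 1 → 0 < L i j)

/-- An `n×n` real matrix `U` is positive upper-bidiagonal if `U i j = 0` whenever
`j ≠ i` and `j ≠ i+1`, and all diagonal and superdiagonal entries are positive. -/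
def IsPosUpperBidiagonal {n : ℕ} (U : Matrix (Fin n) (Fin n) ℝ) : Prop :=
  (∀ i j : Fin n, (j : ℕ) ≠ (i : ℕ) → (j : ℕ) ≠ (i : ℕ) + 1 → U i j = 0) ∧
  (∀ i : Fin n, 0 < U i i) ∧
  (∀ i j : Fin n, (j : ℕ) = (i : ℕ) + 1 → 0 < U i j)

/-- Normalized: moreover all diagonal entries are `1`. -/
def IsNormalizedPosLowerBidiagonal {n : ℕ} (L : Matrix (Fin n) (Fin n) ℝ) : Prop :=
  IsPosLowerBidiagonal L ∧ ∀ i : Fin n, L i i = 1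

def IsNormalizedPosUpperBidiagonal {n : ℕ} (U : Matrix (Fin n) (Fin n) ℝ) : Prop :=
  IsPosUpperBidiagonal U ∧ ∀ i : Fin n, U i i = 1

lemma split_lower {n : ℕ} {A : Matrix (Fin n) (Fin n) ℝ} (h : IsPosLowerBidiagonal A) :
    ∃ L d, IsNormalizedPosLowerBidiagonal L ∧ (∀ i, 0 < d i) ∧ A = L * Matrix.diagonal d := by
  obtain ⟨h0, hd, hs⟩ := h
  refine ⟨Matrix.of fun i j => A i j * (A j j)⁻¹, fun i => A i i,
    ⟨⟨fun i j h1 h2 => by simp [h0 i j h1 h2], fun i => by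
      simpa using mul_pos (hd i) (inv_pos.2 (hd i)),
      fun i j hij => mul_pos (hs i j hij) (inv_pos.2 (hd j))⟩,
      fun i => by simp [mul_inv_cancel₀ (hd i).ne']⟩, hd, ?_⟩
  ext i j
  simp [Matrix.mul_diagonal, inv_mul_cancel_right₀ (hd j).ne']

lemma comm_lower {n : ℕ} {d : Fin n → ℝ} {L : Matrix (Fin n) (Fin n) ℝ}
    (hd : ∀ i, 0 < d i) (hL : IsNormalizedPosLowerBidiagonal L) :
    ∃ L', IsNormalizedPosLowerBidiagonal L' ∧
      Matrix.diagonal d * L = L' * Matrix.diagonal d := by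
  obtain ⟨⟨h0, hdg, hs⟩, h1⟩ := hL
  refine ⟨Matrix.of fun i j => d i * L i j * (d j)⁻¹,
    ⟨⟨fun i j a b => by simp [h0 i j a b], fun i => by
        have := h1 i
        simp [this, mul_inv_cancel₀ (hd i).ne'],
      fun i j hij => mul_pos (mul_pos (hd i) (hs i j hij)) (inv_pos.2 (hd j))⟩,
      fun i => by simp [h1 i, mul_inv_cancel₀ (hd i).ne']⟩, ?_⟩
  ext i j
  simp [Matrix.mul_diagonal, Matrix.diagonal_mul, inv_mul_cancel_right₀ (hd j).ne']

lemma push_lower {n : ℕ} (ℓ : List (Matrix (Fin n) (Fin n) ℝ))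
    (hℓ : ∀ A ∈ ℓ, IsNormalizedPosLowerBidiagonal A) (d : Fin n → ℝ) (hd : ∀ i, 0 < d i) :
    ∃ ℓ' : List (Matrix (Fin n) (Fin n) ℝ), ℓ'.length = ℓ.length ∧ (∀ A ∈ ℓ', IsNormalizedPosLowerBidiagonal A) ∧
      Matrix.diagonal d * ℓ.prod = ℓ'.prod * Matrix.diagonal d := by
  induction ℓ with
  | nil => exact ⟨[], rfl, by simp, by simp⟩
  | cons A t ih =>
    obtain ⟨t', hlen, ht', hprod⟩ := ih (fun B hB => hℓ B (List.mem_cons_of_mem _ hB))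
    obtain ⟨A', hA', hAe⟩ := comm_lower hd (hℓ A (List.mem_cons_self))
    refine ⟨A' :: t', by simp [hlen], ?_, ?_⟩
    · rintro B hB
      rcases List.mem_cons.1 hB with rfl | hB
      · exact hA'
      · exact ht' B hB
    · simp only [List.prod_cons, ← mul_assoc, hAe]
      rw [mul_assoc, hprod, ← mul_assoc]

lemma lower_list {n : ℕ} (ℓ : List (Matrix (Fin n) (Fin n) ℝ))
    (h : ∀ A ∈ ℓ, IsPosLowerBidiagonal A) :
    ∃ (ℓ' : List (Matrix (Fin n) (Fin n) ℝ)) (d : Fin n → ℝ), ℓ'.length = ℓ.length ∧ (∀ A ∈ ℓ', IsNormalizedPosLowerBidiagonal A) ∧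
      (∀ i, 0 < d i) ∧ ℓ.prod = ℓ'.prod * Matrix.diagonal d := by
  induction ℓ with
  | nil => exact ⟨[], fun _ => 1, rfl, by simp, fun _ => one_pos, by simp⟩
  | cons A t ih =>
    obtain ⟨t', e, hlen, ht', he, hte⟩ := ih (fun B hB => h B (List.mem_cons_of_mem _ hB))
    obtain ⟨L, d0, hL, hd0, hALd⟩ := split_lower (h A (List.mem_cons_self))
    obtain ⟨t'', hlen'', ht'', hpush⟩ := push_lower t' ht' d0 hd0
    refine ⟨L :: t'', fun i => d0 i * e i, by simp [hlen'', hlen], ?_,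
      fun i => mul_pos (hd0 i) (he i), ?_⟩
    · rintro B hB
      rcases List.mem_cons.1 hB with rfl | hB
      · exact hL
      · exact ht'' B hB
    · rw [List.prod_cons, List.prod_cons, hte, hALd]
      calc L * Matrix.diagonal d0 * (t'.prod * Matrix.diagonal e)
          = L * (Matrix.diagonal d0 * t'.prod * Matrix.diagonal e) := by
            simp [mul_assoc]
        _ = L * (t''.prod * Matrix.diagonal d0 * Matrix.diagonal e) := by rw [hpush]
        _ = L * t''.prod * (Matrix.diagonal fun i => d0 i * e i) := by
            rw [← Matrix.diagonal_mul_diagonal]; simp [Matrix.mul_assoc]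

lemma split_upper {n : ℕ} {A : Matrix (Fin n) (Fin n) ℝ} (h : IsPosUpperBidiagonal A) :
    ∃ U d, IsNormalizedPosUpperBidiagonal U ∧ (∀ i, 0 < d i) ∧ A = Matrix.diagonal d * U := by
  obtain ⟨h0, hd, hs⟩ := h
  refine ⟨Matrix.of fun i j => (A i i)⁻¹ * A i j, fun i => A i i,
    ⟨⟨fun i j a b => by simp [h0 i j a b], fun i => by
      simpa using mul_pos (inv_pos.2 (hd i)) (hd i),
      fun i j hij => mul_pos (inv_pos.2 (hd i)) (hs i j hij)⟩,
      fun i => by simp [inv_mul_cancel₀ (hd i).ne']⟩, hd, ?_⟩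
  ext i j
  simp [Matrix.diagonal_mul, mul_inv_cancel_left₀ (hd i).ne']

lemma comm_upper {n : ℕ} {d : Fin n → ℝ} {U : Matrix (Fin n) (Fin n) ℝ}
    (hd : ∀ i, 0 < d i) (hU : IsNormalizedPosUpperBidiagonal U) :
    ∃ U', IsNormalizedPosUpperBidiagonal U' ∧
      U * Matrix.diagonal d = Matrix.diagonal d * U' := by
  obtain ⟨⟨h0, hdg, hs⟩, h1⟩ := hU
  refine ⟨Matrix.of fun i j => (d i)⁻¹ * U i j * d j,
    ⟨⟨fun i j a b => by simp [h0 i j a b], fun i => by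
        have := h1 i
        simp [this, inv_mul_cancel₀ (hd i).ne'],
      fun i j hij => mul_pos (mul_pos (inv_pos.2 (hd i)) (hs i j hij)) (hd j)⟩,
      fun i => by simp [h1 i, inv_mul_cancel₀ (hd i).ne']⟩, ?_⟩
  ext i j
  simp [Matrix.mul_diagonal, Matrix.diagonal_mul]
  rw [← mul_assoc, ← mul_assoc, mul_inv_cancel₀ (hd i).ne', one_mul]

lemma push_upper {n : ℕ} (ℓ : List (Matrix (Fin n) (Fin n) ℝ))
    (hℓ : ∀ A ∈ ℓ, IsNormalizedPosUpperBidiagonal A) (d : Fin n → ℝ) (hd : ∀ i, 0 < d i) :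
    ∃ ℓ' : List (Matrix (Fin n) (Fin n) ℝ), ℓ'.length = ℓ.length ∧ (∀ A ∈ ℓ', IsNormalizedPosUpperBidiagonal A) ∧
      ℓ.prod * Matrix.diagonal d = Matrix.diagonal d * ℓ'.prod := by
  induction ℓ with
  | nil => exact ⟨[], rfl, by simp, by simp⟩
  | cons A t ih =>
    obtain ⟨t', hlen, ht', hprod⟩ := ih (fun B hB => hℓ B (List.mem_cons_of_mem _ hB))
    obtain ⟨A', hA', hAe⟩ := comm_upper hd (hℓ A (List.mem_cons_self))
    refine ⟨A' :: t', by simp [hlen], ?_, ?_⟩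
    · rintro B hB
      rcases List.mem_cons.1 hB with rfl | hB
      · exact hA'
      · exact ht' B hB
    · rw [List.prod_cons, List.prod_cons, mul_assoc, hprod, ← mul_assoc, hAe, mul_assoc]

lemma upper_list {n : ℕ} (ℓ : List (Matrix (Fin n) (Fin n) ℝ))
    (h : ∀ A ∈ ℓ, IsPosUpperBidiagonal A) :
    ∃ (ℓ' : List (Matrix (Fin n) (Fin n) ℝ)) (d : Fin n → ℝ), ℓ'.length = ℓ.length ∧ (∀ A ∈ ℓ', IsNormalizedPosUpperBidiagonal A) ∧
      (∀ i, 0 < d i) ∧ ℓ.prod = Matrix.diagonal d * ℓ'.prod := by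
  induction ℓ with
  | nil => exact ⟨[], fun _ => 1, rfl, by simp, fun _ => one_pos, by simp⟩
  | cons A t ih =>
    obtain ⟨t', e, hlen, ht', he, hte⟩ := ih (fun B hB => h B (List.mem_cons_of_mem _ hB))
    obtain ⟨U, d0, hU, hd0, hAUd⟩ := split_upper (h A (List.mem_cons_self))
    obtain ⟨U', hU', hcomm⟩ := comm_upper he hU
    refine ⟨U' :: t', fun i => d0 i * e i, by simp [hlen], ?_,
      fun i => mul_pos (hd0 i) (he i), ?_⟩
    · rintro B hB
      rcases List.mem_cons.1 hB with rfl | hB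
      · exact hU'
      · exact ht' B hB
    · rw [List.prod_cons, List.prod_cons, hte, hAUd]
      calc Matrix.diagonal d0 * U * (Matrix.diagonal e * t'.prod)
          = Matrix.diagonal d0 * (U * Matrix.diagonal e) * t'.prod := by
            simp [mul_assoc]
        _ = Matrix.diagonal d0 * (Matrix.diagonal e * U') * t'.prod := by rw [hcomm]
        _ = (Matrix.diagonal fun i => d0 i * e i) * (U' * t'.prod) := by
            simp [← mul_assoc]

/-- Any positive bidiagonal factorization `T = 𝓛₁⋯𝓛ₚ 𝓤_q⋯𝓤₁` can be written in
normalized form `T = L₁⋯Lₚ Δ U_q⋯U₁` with normalized bidiagonal factors and a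
positive diagonal matrix `Δ`. -/
theorem normalized_positive_bidiagonal_factorization
    {n p q : ℕ} (hn : 1 ≤ n) (T : Matrix (Fin n) (Fin n) ℝ)
    (cL : Fin p → Matrix (Fin n) (Fin n) ℝ) (cU : Fin q → Matrix (Fin n) (Fin n) ℝ)
    (hcL : ∀ i, IsPosLowerBidiagonal (cL i)) (hcU : ∀ j, IsPosUpperBidiagonal (cU j))
    (hT : T = (List.ofFn cL).prod * (List.ofFn cU).reverse.prod) :
    ∃ (L : Fin p → Matrix (Fin n) (Fin n) ℝ) (U : Fin q → Matrix (Fin n) (Fin n) ℝ)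
      (d : Fin n → ℝ),
      (∀ i, IsNormalizedPosLowerBidiagonal (L i)) ∧
      (∀ j, IsNormalizedPosUpperBidiagonal (U j)) ∧
      (∀ i, 0 < d i) ∧
      T = (List.ofFn L).prod * Matrix.diagonal d * (List.ofFn U).reverse.prod := by
  have hmemL : ∀ A ∈ List.ofFn cL, IsPosLowerBidiagonal A := by
    intro A hA
    obtain ⟨i, rfl⟩ := List.mem_ofFn.1 hA
    exact hcL i
  have hmemU : ∀ A ∈ (List.ofFn cU).reverse, IsPosUpperBidiagonal A := by
    intro A hA
    rw [List.mem_reverse] at hA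
    obtain ⟨i, rfl⟩ := List.mem_ofFn.1 hA
    exact hcU i
  obtain ⟨ℓL, d1, hlenL, hℓL, hd1, hLprod⟩ := lower_list (List.ofFn cL) hmemL
  obtain ⟨ℓU, d2, hlenU, hℓU, hd2, hUprod⟩ := upper_list ((List.ofFn cU).reverse) hmemU
  have hlenL' : ℓL.length = p := by simpa using hlenL
  have hlenU' : ℓU.reverse.length = q := by simpa using hlenU
  refine ⟨fun i => ℓL.get (Fin.cast hlenL'.symm i),
          fun j => ℓU.reverse.get (Fin.cast hlenU'.symm j),
          fun i => d1 i * d2 i, ?_, ?_, fun i => mul_pos (hd1 i) (hd2 i), ?_⟩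
  · intro i; exact hℓL _ (List.get_mem _ _)
  · intro j
    exact hℓU _ (List.mem_reverse.1 (List.get_mem _ _))
  have hofnL : List.ofFn (fun i => ℓL.get (Fin.cast hlenL'.symm i)) = ℓL := by
    apply List.ext_get (by simp [hlenL'])
    intro i h1 h2
    simp
  have hofnU : List.ofFn (fun j => ℓU.reverse.get (Fin.cast hlenU'.symm j)) = ℓU.reverse := by
    apply List.ext_get (by simp [hlenU'])
    intro i h1 h2
    simp
  rw [hofnL, hofnU, List.reverse_reverse, hT, hLprod, hUprod]
  rw [← mul_assoc, mul_assoc ℓL.prod, Matrix.diagonal_mul_diagonal]
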